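/- Let p ≥ 5 be a prime and m an even positive integer. Then p·B_m ≡ Σ_{a=1}^{p−1} a^m (mod p²), as a congruence of p-integral rational numbers. -/

import Mathlib

open Finset

lemma pow_ge_add (b c : ℕ) (hb2 : 2 ≤ b) (hb : c + 1 ≤ b) :
    ∀ k, 1 ≤ k → k + c ≤ b ^ k := by
  intro k hk
  induction k with
  | zero => omega
  | succ n ih =>
    rcases Nat.eq_zero_or_pos n with rfl | hn
    · simpa using by omega
    · have h1 := ih hn
      have h2 : b ^ (n + 1) = b * b ^ n := by ring
      have h3 : 2 * (n + c) ≤ b * b ^ n := Nat.mul_le_mul hb2 h1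
      omega

lemma val_add_le (p c j : ℕ) (hcj : c ≤ j)
    (hpc : ∀ k, 1 ≤ k → k + c ≤ p ^ k) : padicValNat p j + c ≤ j := by
  rcases Nat.eq_zero_or_pos j with rfl | hj
  · simp [padicValNat.zero]; omega
  set k := padicValNat p j with hk
  rcases Nat.eq_zero_or_pos k with h0 | h1
  · omega
  have hle : p ^ k ≤ j := Nat.le_of_dvd hj pow_padicValNat_dvd
  have := hpc k h1
  omega

lemma norm_ppow_div {p : ℕ} [hp : Fact p.Prime] (a j c : ℕ) (hj : j ≠ 0)
    (h : padicValNat p j + c ≤ a) :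
    padicNorm p ((p : ℚ) ^ a / (j : ℚ)) ≤ (p : ℚ) ^ (-(c : ℤ)) := by
  have hp1 : 1 < p := hp.out.one_lt
  have hp0 : (p : ℚ) ≠ 0 := Nat.cast_ne_zero.mpr hp.out.pos.ne'
  have hj0 : (j : ℚ) ≠ 0 := Nat.cast_ne_zero.mpr hj
  have hx : (p : ℚ) ^ a / (j : ℚ) ≠ 0 := div_ne_zero (pow_ne_zero _ hp0) hj0
  rw [padicNorm.eq_zpow_of_nonzero hx]
  have hval : padicValRat p ((p : ℚ) ^ a / (j : ℚ))
      = (a : ℤ) - (padicValNat p j : ℤ) := by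
    rw [padicValRat.div (pow_ne_zero _ hp0) hj0, padicValRat.pow (p : ℚ),
      padicValRat.self hp1, padicValRat.of_nat]
    ring
  rw [hval]
  apply zpow_le_zpow_right₀ (by exact_mod_cast hp1.le)
  omega

lemma choose_id (n i : ℕ) (h : i ≤ n) :
    (n + 1).choose i * (n + 1 - i) = (n + 1) * n.choose i := by
  have h1 : (n + 1).choose i = (n + 1).choose (n + 1 - i) :=
    (Nat.choose_symm (by omega)).symm
  have h2 : n + 1 - i = (n - i) + 1 := by omega
  have h3 := Nat.add_one_mul_choose_eq n (n - i)
  have h4 : n.choose (n - i) = n.choose i := Nat.choose_symm h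
  rw [h1, h2, ← h3, h4]

lemma term_eq (P b : ℚ) (n i : ℕ) (h : i ≤ n) :
    b * ((n + 1).choose i : ℚ) * P ^ (n + 1 - i) / ((n : ℚ) + 1)
      = (P * b) * (n.choose i : ℚ) * (P ^ (n - i) / ((n + 1 - i : ℕ) : ℚ)) := by
  have hc := choose_id n i h
  obtain ⟨d, rfl⟩ := le_iff_exists_add.mp h
  have e1 : i + d + 1 - i = d + 1 := by omega
  have e2 : i + d - i = d := by omega
  rw [e1, e2]
  rw [e1] at hc
  have hcq : ((i + d + 1).choose i : ℚ) * ((d : ℚ) + 1)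
      = ((i : ℚ) + (d : ℚ) + 1) * ((i + d).choose i : ℚ) := by exact_mod_cast hc
  have hd : ((d : ℚ) + 1) ≠ 0 := by positivity
  have hn : ((i : ℚ) + (d : ℚ) + 1) ≠ 0 := by positivity
  push_cast
  rw [pow_succ]
  field_simp
  linear_combination (b * P ^ d * P) * hcq

lemma key_identity (p n : ℕ) :
    (p : ℚ) * bernoulli n = (∑ k ∈ range p, (k : ℚ) ^ n)
      - ∑ i ∈ range n, bernoulli i * ((n + 1).choose i : ℚ)
          * (p : ℚ) ^ (n + 1 - i) / ((n : ℚ) + 1) := by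
  have key := sum_range_pow p n
  rw [Finset.sum_range_succ] at key
  have hfn : bernoulli n * ((n + 1).choose n : ℚ) * (p : ℚ) ^ (n + 1 - n) / ((n : ℚ) + 1)
      = (p : ℚ) * bernoulli n := by
    rw [Nat.choose_succ_self_right]
    have : n + 1 - n = 1 := by omega
    rw [this, pow_one]
    have hn : ((n : ℚ) + 1) ≠ 0 := by positivity
    push_cast
    field_simp
  rw [hfn] at key
  linarith [key]

lemma pB_int (p : ℕ) (hp : p.Prime) : ∀ n : ℕ, padicNorm p ((p : ℚ) * bernoulli n) ≤ 1 := by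
  haveI : Fact p.Prime := ⟨hp⟩
  intro n
  induction n using Nat.strong_induction_on with
  | _ n ih =>
  rw [key_identity p n]
  apply le_trans padicNorm.sub
  apply max_le
  · apply padicNorm.sum_le' _ zero_le_one
    intro k _
    have : ((k : ℚ) ^ n) = ((k ^ n : ℕ) : ℚ) := by push_cast; ring
    rw [this]
    exact padicNorm.of_nat _
  · apply padicNorm.sum_le' _ zero_le_one
    intro i hi
    have hin : i ≤ n := (Finset.mem_range.mp hi).le
    rw [term_eq (p : ℚ) (bernoulli i) n i hin]
    rw [padicNorm.mul, padicNorm.mul]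
    have h1 : padicNorm p ((p : ℚ) * bernoulli i) ≤ 1 := ih i (Finset.mem_range.mp hi)
    have h2 : padicNorm p ((n.choose i : ℚ)) ≤ 1 := padicNorm.of_nat _
    have h3 : padicNorm p ((p : ℚ) ^ (n - i) / ((n + 1 - i : ℕ) : ℚ)) ≤ 1 := by
      have hbound : padicValNat p (n + 1 - i) + 0 ≤ n - i := by
        have := val_add_le p 1 (n + 1 - i) (by omega)
          (pow_ge_add p 1 hp.two_le hp.two_le)
        omega
      have := norm_ppow_div (p := p) (n - i) (n + 1 - i) 0 (by omega) hbound
      simpa using this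
    calc padicNorm p ((p:ℚ) * bernoulli i) * padicNorm p ((n.choose i : ℚ))
          * padicNorm p ((p : ℚ) ^ (n - i) / ((n + 1 - i : ℕ) : ℚ))
        ≤ 1 * 1 * 1 := by gcongr <;> exact padicNorm.nonneg _
      _ = 1 := by norm_num

lemma mul3_le {a b c x y : ℚ} (ha0 : 0 ≤ a) (hb0 : 0 ≤ b) (hc0 : 0 ≤ c)
    (hx : a ≤ x) (hb : b ≤ 1) (hy : c ≤ y) : a * b * c ≤ x * y := by
  have hx0 : 0 ≤ x := le_trans ha0 hx
  have h1 : a * b ≤ x := by nlinarith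
  nlinarith

lemma bernoulli_three_norm (m : ℕ) (hm : 0 < m) (hme : Even m) :
    padicNorm 3 (((3 : ℕ) : ℚ) * bernoulli m) = 1 := by
  haveI : Fact (Nat.Prime 3) := ⟨by norm_num⟩
  rw [key_identity 3 m]
  have hA : (∑ k ∈ range 3, (k : ℚ) ^ m) = ((1 + 2 ^ m : ℕ) : ℚ) := by
    rw [Finset.sum_range_succ, Finset.sum_range_succ, Finset.sum_range_succ]
    rw [Finset.sum_range_zero]
    push_cast
    rw [zero_pow hm.ne']
    ring
  have hAnorm : padicNorm 3 (∑ k ∈ range 3, (k : ℚ) ^ m) = 1 := by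
    rw [hA, padicNorm.nat_eq_one_iff]
    obtain ⟨r, rfl⟩ := hme
    intro hdvd
    have h4 : 2 ^ (r + r) = 4 ^ r := by
      rw [pow_add]
      rw [show (4:ℕ) = 2 * 2 by norm_num, Nat.mul_pow]
    rw [h4] at hdvd
    have hmod : 4 ^ r % 3 = 1 := by
      rw [Nat.pow_mod]
      norm_num
    omega
  have hB : padicNorm 3 (∑ i ∈ range m, bernoulli i * (((m + 1).choose i : ℕ) : ℚ)
      * ((3:ℕ) : ℚ) ^ (m + 1 - i) / ((m : ℚ) + 1)) ≤ (3 : ℚ) ^ (-1 : ℤ) := by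
    apply padicNorm.sum_le' _ (by positivity)
    intro i hi
    have him : i < m := Finset.mem_range.mp hi
    have hin : i ≤ m := him.le
    rw [term_eq ((3:ℕ) : ℚ) (bernoulli i) m i hin, padicNorm.mul, padicNorm.mul]
    have h1 : padicNorm 3 (((3:ℕ) : ℚ) * bernoulli i) ≤ 1 := pB_int 3 (by norm_num) i
    have h2 : padicNorm 3 ((m.choose i : ℚ)) ≤ 1 := padicNorm.of_nat _
    have h3 : padicNorm 3 (((3:ℕ) : ℚ) ^ (m - i) / ((m + 1 - i : ℕ) : ℚ)) ≤ (3 : ℚ) ^ (-1 : ℤ) := by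
      have hv : padicValNat 3 (m + 1 - i) + 2 ≤ m + 1 - i :=
        val_add_le 3 2 (m + 1 - i) (by omega) (pow_ge_add 3 2 (by norm_num) (by norm_num))
      have := norm_ppow_div (p := 3) (m - i) (m + 1 - i) 1 (by omega) (by omega)
      exact_mod_cast this
    calc padicNorm 3 (((3:ℕ):ℚ) * bernoulli i) * padicNorm 3 ((m.choose i : ℚ))
          * padicNorm 3 (((3:ℕ) : ℚ) ^ (m - i) / ((m + 1 - i : ℕ) : ℚ))
        ≤ 1 * (3 : ℚ) ^ (-1 : ℤ) :=
          mul3_le (padicNorm.nonneg _) (padicNorm.nonneg _) (padicNorm.nonneg _) h1 h2 h3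
      _ = (3 : ℚ) ^ (-1 : ℤ) := one_mul _
  have hlt : (3 : ℚ) ^ (-1 : ℤ) < 1 := by norm_num
  rw [sub_eq_add_neg, padicNorm.add_eq_max_of_ne (by
    rw [hAnorm, padicNorm.neg]; exact (lt_of_le_of_lt hB hlt).ne'), hAnorm, padicNorm.neg]
  exact max_eq_left (hB.trans hlt.le)

/-- For a prime `p ≥ 5` and an even positive integer `m`,
`p * B_m ≡ ∑_{a=1}^{p-1} a ^ m (mod p²)` as `p`-integral rational numbers. -/
theorem pBernoulli_congr_sum_pow (p m : ℕ) (hp : p.Prime) (hp5 : 5 ≤ p)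
    (hm : 0 < m) (hme : Even m) :
    2 ≤ padicValRat p ((p : ℚ) * bernoulli m - ∑ a ∈ Finset.Icc 1 (p - 1), (a : ℚ) ^ m) := by
  haveI : Fact p.Prime := ⟨hp⟩
  have hm2 : 2 ≤ m := by
    rcases hme with ⟨r, hr⟩; omega
  have hp0 : 0 < p := hp.pos
  -- rewrite the Icc sum as a range sum
  have hS : (∑ a ∈ Finset.Icc 1 (p - 1), (a : ℚ) ^ m) = ∑ k ∈ range p, (k : ℚ) ^ m := by
    have h1 : Finset.Icc 1 (p - 1) = Finset.Ico 1 p := by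
      rw [← Finset.Ico_add_one_right_eq_Icc]
      congr 1
      omega
    rw [h1, Finset.range_eq_Ico, Finset.sum_eq_sum_Ico_succ_bot hp0]
    norm_num [zero_pow hm.ne']
  set D := (p : ℚ) * bernoulli m - ∑ a ∈ Finset.Icc 1 (p - 1), (a : ℚ) ^ m with hD
  have hDeq : D = -∑ i ∈ range m, bernoulli i * ((m + 1).choose i : ℚ)
      * (p : ℚ) ^ (m + 1 - i) / ((m : ℚ) + 1) := by
    rw [hD, hS, key_identity p m]
    ring
  -- norm bound
  have hnorm : padicNorm p D ≤ (p : ℚ) ^ (-2 : ℤ) := by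
    rw [hDeq, padicNorm.neg]
    apply padicNorm.sum_le' _ (by positivity)
    intro i hi
    have him : i < m := Finset.mem_range.mp hi
    rw [term_eq (p : ℚ) (bernoulli i) m i him.le, padicNorm.mul, padicNorm.mul]
    rcases Nat.even_or_odd i with hie | hio
    · -- i even: use p-integrality of p * B_i and j = m+1-i ≥ 3
      have hj3 : 3 ≤ m + 1 - i := by
        rcases hme with ⟨r, hr⟩; rcases hie with ⟨s, hs⟩; omega
      have h1 : padicNorm p ((p : ℚ) * bernoulli i) ≤ 1 := pB_int p hp i
      have h2 : padicNorm p ((m.choose i : ℚ)) ≤ 1 := padicNorm.of_nat _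
      have h3 : padicNorm p ((p : ℚ) ^ (m - i) / ((m + 1 - i : ℕ) : ℚ)) ≤ (p : ℚ) ^ (-2 : ℤ) := by
        have hv : padicValNat p (m + 1 - i) + 3 ≤ m + 1 - i :=
          val_add_le p 3 (m + 1 - i) hj3 (pow_ge_add p 3 hp.two_le (by omega))
        have := norm_ppow_div (p := p) (m - i) (m + 1 - i) 2 (by omega) (by omega)
        exact_mod_cast this
      calc padicNorm p ((p:ℚ) * bernoulli i) * padicNorm p ((m.choose i : ℚ))
            * padicNorm p ((p : ℚ) ^ (m - i) / ((m + 1 - i : ℕ) : ℚ))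
          ≤ 1 * (p : ℚ) ^ (-2 : ℤ) :=
            mul3_le (padicNorm.nonneg _) (padicNorm.nonneg _) (padicNorm.nonneg _) h1 h2 h3
        _ = (p : ℚ) ^ (-2 : ℤ) := one_mul _
    · rcases Nat.lt_or_ge i 2 with hi1 | hi3
      · -- i = 1
        have hieq : i = 1 := by rcases hio with ⟨s, hs⟩; omega
        subst hieq
        have h1 : padicNorm p ((p : ℚ) * bernoulli 1) = (p : ℚ) ^ (-1 : ℤ) := by
          rw [bernoulli_one]
          have : (p : ℚ) * (-1 / 2) = -((p : ℚ) / 2) := by ring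
          rw [this, padicNorm.neg, padicNorm.div]
          have hn2 : padicNorm p (2 : ℚ) = 1 := by
            rw [show (2 : ℚ) = ((2 : ℤ) : ℚ) by norm_num, padicNorm.int_eq_one_iff]
            intro hdvd
            have := Int.le_of_dvd (by norm_num) hdvd
            omega
          rw [hn2, padicNorm.padicNorm_p_of_prime, div_one]
          rw [zpow_neg, zpow_one]
        have h2 : padicNorm p ((m.choose 1 : ℚ)) ≤ 1 := padicNorm.of_nat _
        have h3 : padicNorm p ((p : ℚ) ^ (m - 1) / ((m + 1 - 1 : ℕ) : ℚ)) ≤ (p : ℚ) ^ (-1 : ℤ) := by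
          have hv : padicValNat p m + 2 ≤ m :=
            val_add_le p 2 m hm2 (pow_ge_add p 2 hp.two_le (by omega))
          have he : m + 1 - 1 = m := by omega
          rw [he]
          have := norm_ppow_div (p := p) (m - 1) m 1 (by omega) (by omega)
          exact_mod_cast this
        calc padicNorm p ((p:ℚ) * bernoulli 1) * padicNorm p ((m.choose 1 : ℚ))
              * padicNorm p ((p : ℚ) ^ (m - 1) / ((m + 1 - 1 : ℕ) : ℚ))
            ≤ (p : ℚ) ^ (-1 : ℤ) * (p : ℚ) ^ (-1 : ℤ) :=
              mul3_le (padicNorm.nonneg _) (padicNorm.nonneg _) (padicNorm.nonneg _)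
                h1.le h2 h3
          _ = (p : ℚ) ^ (-2 : ℤ) := by
              rw [← zpow_add₀ (by exact_mod_cast hp.pos.ne' : (p:ℚ) ≠ 0)]
              norm_num
      · -- i odd, i ≥ 3 : bernoulli i = 0
        have hb0 : bernoulli i = 0 := by
          rw [bernoulli_eq_bernoulli'_of_ne_one (by omega)]
          exact bernoulli'_eq_zero_of_odd hio (by omega)
        rw [hb0]
        simp only [mul_zero, padicNorm.zero, zero_mul]
        positivity
  -- D ≠ 0 via the 3-adic norm
  have hne : D ≠ 0 := by
    intro h0
    have hpBm : (p : ℚ) * bernoulli m = ∑ a ∈ Finset.Icc 1 (p - 1), (a : ℚ) ^ m := by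
      rw [hD] at h0
      exact sub_eq_zero.mp h0
    haveI : Fact (Nat.Prime 3) := ⟨by norm_num⟩
    have h3B : padicNorm 3 (((3 : ℕ) : ℚ) * bernoulli m) = 1 := bernoulli_three_norm m hm hme
    have hBm0 : bernoulli m ≠ 0 := by
      intro hb
      rw [hb, mul_zero] at h3B
      simp [padicNorm.zero] at h3B
    have hBval : padicNorm 3 (bernoulli m) = 3 := by
      rw [padicNorm.mul] at h3B
      have hpn : padicNorm 3 (((3:ℕ) : ℚ)) = (3 : ℚ)⁻¹ := by
        exact_mod_cast padicNorm.padicNorm_p_of_prime (p := 3)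
      rw [hpn] at h3B
      have h' : (3:ℚ)⁻¹ * padicNorm 3 (bernoulli m) = (3:ℚ)⁻¹ * 3 := by
        rw [h3B]; norm_num
      exact mul_left_cancel₀ (by norm_num) h'
    have hnp : padicNorm 3 ((p : ℚ)) = 1 := by
      rw [padicNorm.nat_eq_one_iff]
      intro hdvd
      have := (Nat.prime_dvd_prime_iff_eq (by norm_num) hp).mp hdvd
      omega
    have hleft : padicNorm 3 ((p : ℚ) * bernoulli m) = 3 := by
      rw [padicNorm.mul, hnp, hBval, one_mul]
    have hright : padicNorm 3 (∑ a ∈ Finset.Icc 1 (p - 1), (a : ℚ) ^ m) ≤ 1 := by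
      apply padicNorm.sum_le' _ zero_le_one
      intro a _
      have : ((a : ℚ) ^ m) = ((a ^ m : ℕ) : ℚ) := by push_cast; ring
      rw [this]
      exact padicNorm.of_nat _
    rw [hpBm] at hleft
    rw [hleft] at hright
    norm_num at hright
  -- conclude
  rw [padicNorm.eq_zpow_of_nonzero hne] at hnorm
  have hp1Q : (1 : ℚ) < (p : ℚ) := by exact_mod_cast hp.one_lt
  have := (zpow_le_zpow_iff_right₀ hp1Q).mp hnorm
  omega
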